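/- In a credit-attribution setting with reliabilities p : N → [0,1], let x ∈ N and j ∈ N with j ≠ x, and regard Sh[v̄_{FO}](x) as a function of p. (i) If p_i > 0 for all i ≠ j and there exists a paper P_k with positive weight w_k > 0 such that both x and j belong to Auth_k, then p_j ↦ Sh[v̄_{FO}](x) is strictly increasing on [0,1] (all other reliabilities fixed). (ii) If j is not a coauthor of x (i.e., no paper contains both x and j), then Sh[v̄_{FO}](x) does not depend on p_j. -/

import Mathlib

open Finset

attribute [local instance] Classical.propDecidable

noncomputable section

/-- `Π_{T,S}(p) = (∏_{i∈T} p i) * (∏_{i∈S\T} (1 - p i))`. -/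
def prodPi {α : Type*} (p : α → ℝ) (T S : Finset α) : ℝ :=
  (∏ i ∈ T, p i) * (∏ i ∈ S \ T, (1 - p i))

/-- Reliability extension of a TU-game. -/
def relExt {α : Type*} (p : α → ℝ) (v : Finset α → ℝ) (S : Finset α) : ℝ :=
  ∑ T ∈ S.powerset, v T * prodPi p T S

/-- The set of players preceding `x` in the ordering `σ`. -/
def precedingSet {α : Type*} [Fintype α] (σ : Fin (Fintype.card α) ≃ α) (x : α) : Finset α :=
  Finset.univ.filter fun y => σ.symm y < σ.symm x

/-- The Shapley value of player `x` in the TU-game `v`. -/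
def shapley {α : Type*} [Fintype α] (v : Finset α → ℝ) (x : α) : ℝ :=
  (1 / ((Fintype.card α).factorial : ℝ)) *
    ∑ σ : Fin (Fintype.card α) ≃ α,
      (v (insert x (precedingSet σ x)) - v (precedingSet σ x))

/-- `Pap x`: the papers having `x` among their authors. -/
def Pap {α β : Type*} [Fintype β] (Auth : β → Finset α) (x : α) : Finset β :=
  Finset.univ.filter fun k => x ∈ Auth k

/-- The full credit game. -/
def vFC {α β : Type*} [Fintype β] (Auth : β → Finset α) (w : β → ℝ) (S : Finset α) : ℝ :=
  ∑ k ∈ Finset.univ.filter (fun k => (Auth k ∩ S).Nonempty), w k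

/-- The full obligation game. -/
def vFO {α β : Type*} [Fintype β] (Auth : β → Finset α) (w : β → ℝ) (S : Finset α) : ℝ :=
  ∑ k ∈ Finset.univ.filter (fun k => Auth k ⊆ S), w k

/-! ### Auxiliary lemmas -/

lemma sum_prodPi {α : Type*} (p : α → ℝ) (S : Finset α) :
    ∑ T ∈ S.powerset, prodPi p T S = 1 := by
  have h := Finset.prod_add p (fun i => 1 - p i) S
  simp only [add_sub_cancel, Finset.prod_const_one] at h
  simp only [prodPi]
  exact h.symm

lemma sum_prodPi_filter {α : Type*} (p : α → ℝ) (A S : Finset α) (hAS : A ⊆ S) :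
    ∑ T ∈ S.powerset.filter (fun T => A ⊆ T), prodPi p T S = ∏ i ∈ A, p i := by
  have key : ∑ T ∈ S.powerset.filter (fun T => A ⊆ T), prodPi p T S
      = ∑ U ∈ (S \ A).powerset, (∏ i ∈ A, p i) * prodPi p U (S \ A) := by
    refine Finset.sum_nbij' (fun T => T \ A) (fun U => U ∪ A) ?_ ?_ ?_ ?_ ?_
    · intro T hT
      simp only [mem_filter, mem_powerset] at hT ⊢
      exact sdiff_subset_sdiff hT.1 (le_refl _)
    · intro U hU
      simp only [mem_powerset] at hU ⊢
      simp only [mem_filter, mem_powerset]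
      exact ⟨union_subset (hU.trans (sdiff_subset)) hAS, subset_union_right⟩
    · intro T hT
      simp only [mem_filter, mem_powerset] at hT
      exact sdiff_union_of_subset hT.2
    · intro U hU
      simp only [mem_powerset] at hU
      ext a
      simp only [mem_sdiff, mem_union]
      have h1 : a ∈ U → a ∉ A := fun h => (mem_sdiff.mp (hU h)).2
      tauto
    · intro T hT
      simp only [mem_filter, mem_powerset] at hT
      unfold prodPi
      have h1 : (∏ i ∈ T, p i) = (∏ i ∈ A, p i) * ∏ i ∈ T \ A, p i := by
        rw [mul_comm, Finset.prod_sdiff hT.2]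
      have h2 : S \ T = (S \ A) \ (T \ A) := by
        ext a
        simp only [mem_sdiff]
        constructor
        · intro ⟨h3, h4⟩
          exact ⟨⟨h3, fun hA => h4 (hT.2 hA)⟩, fun h => h4 h.1⟩
        · intro ⟨⟨h3, h4⟩, h5⟩
          exact ⟨h3, fun hTm => h5 ⟨hTm, h4⟩⟩
      rw [h1, h2]; ring
  rw [key, ← Finset.mul_sum, sum_prodPi, mul_one]

lemma sum_prodPi_filter_eq {α : Type*} (p : α → ℝ) (A S : Finset α) :
    ∑ T ∈ S.powerset.filter (fun T => A ⊆ T), prodPi p T S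
      = if A ⊆ S then ∏ i ∈ A, p i else 0 := by
  split_ifs with h
  · exact sum_prodPi_filter p A S h
  · refine Finset.sum_eq_zero fun T hT => ?_
    simp only [mem_filter, mem_powerset] at hT
    exact absurd (hT.2.trans hT.1) h

lemma relExt_vFO {α β : Type*} [Fintype β] (Auth : β → Finset α) (w : β → ℝ)
    (q : α → ℝ) (S : Finset α) :
    relExt q (vFO Auth w) S
      = ∑ k, (if Auth k ⊆ S then (1:ℝ) else 0) * (w k * ∏ i ∈ Auth k, q i) := by
  unfold relExt vFO
  simp only [Finset.sum_filter, Finset.sum_mul, ite_mul, zero_mul]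
  rw [Finset.sum_comm]
  refine Finset.sum_congr rfl fun k _ => ?_
  have : ∀ T ∈ S.powerset, (if Auth k ⊆ T then w k * prodPi q T S else 0)
      = w k * (if Auth k ⊆ T then prodPi q T S else 0) := by
    intro T _; split_ifs <;> simp
  rw [Finset.sum_congr rfl this, ← Finset.mul_sum, ← Finset.sum_filter,
    sum_prodPi_filter_eq]
  split_ifs <;> ring

/-- The Shapley value of the unanimity-type indicator in the permutation form. -/
def gval {α : Type*} [Fintype α] (x : α) (A : Finset α) : ℝ :=
  (1 / ((Fintype.card α).factorial : ℝ)) * ∑ σ : Fin (Fintype.card α) ≃ α,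
    ((if A ⊆ insert x (precedingSet σ x) then (1:ℝ) else 0)
      - (if A ⊆ precedingSet σ x then (1:ℝ) else 0))

lemma shapley_relExt {α β : Type*} [Fintype α] [Fintype β] (Auth : β → Finset α) (w : β → ℝ)
    (q : α → ℝ) (x : α) :
    shapley (relExt q (vFO Auth w)) x
      = ∑ k, w k * (∏ i ∈ Auth k, q i) * gval x (Auth k) := by
  unfold shapley gval
  have h1 : ∀ σ : Fin (Fintype.card α) ≃ α,
      relExt q (vFO Auth w) (insert x (precedingSet σ x))
        - relExt q (vFO Auth w) (precedingSet σ x)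
      = ∑ k, (w k * ∏ i ∈ Auth k, q i) *
          ((if Auth k ⊆ insert x (precedingSet σ x) then (1:ℝ) else 0)
            - (if Auth k ⊆ precedingSet σ x then (1:ℝ) else 0)) := by
    intro σ
    rw [relExt_vFO, relExt_vFO, ← Finset.sum_sub_distrib]
    refine Finset.sum_congr rfl fun k _ => ?_
    ring
  rw [Finset.sum_congr rfl fun σ _ => h1 σ, Finset.sum_comm, Finset.mul_sum]
  refine Finset.sum_congr rfl fun k _ => ?_
  rw [← Finset.mul_sum]
  ring

lemma gval_term_nonneg {α : Type*} [Fintype α] (x : α) (A : Finset α)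
    (σ : Fin (Fintype.card α) ≃ α) :
    (0:ℝ) ≤ (if A ⊆ insert x (precedingSet σ x) then (1:ℝ) else 0)
      - (if A ⊆ precedingSet σ x then (1:ℝ) else 0) := by
  by_cases h2 : A ⊆ precedingSet σ x
  · rw [if_pos (h2.trans (Finset.subset_insert x _)), if_pos h2]; norm_num
  · rw [if_neg h2]; split_ifs <;> norm_num

lemma gval_nonneg {α : Type*} [Fintype α] (x : α) (A : Finset α) : 0 ≤ gval x A := by
  unfold gval
  apply mul_nonneg (by positivity)
  exact Finset.sum_nonneg fun σ _ => gval_term_nonneg x A σ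

lemma gval_pos {α : Type*} [Fintype α] (x : α) (A : Finset α) (hx : x ∈ A) : 0 < gval x A := by
  unfold gval
  apply mul_pos (by positivity)
  apply Finset.sum_pos' (fun σ _ => gval_term_nonneg x A σ)
  have hn : 0 < Fintype.card α := Fintype.card_pos_iff.mpr ⟨x⟩
  set n := Fintype.card α with hndef
  let e : Fin n ≃ α := (Fintype.equivFin α).symm
  let last : Fin n := ⟨n - 1, by omega⟩
  let σ₀ : Fin n ≃ α := (Equiv.swap (e.symm x) last).trans e
  refine ⟨σ₀, Finset.mem_univ _, ?_⟩
  have hsymm : σ₀.symm x = last := by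
    simp only [σ₀, Equiv.symm_trans_apply, Equiv.symm_symm]
    simp [Equiv.swap_apply_left]
  have hxnot : x ∉ precedingSet σ₀ x := by
    simp [precedingSet]
  have hsub : A ⊆ insert x (precedingSet σ₀ x) := by
    intro a ha
    rcases eq_or_ne a x with rfl | hax
    · exact Finset.mem_insert_self _ _
    · refine Finset.mem_insert_of_mem ?_
      simp only [precedingSet, Finset.mem_filter, Finset.mem_univ, true_and, hsymm]
      have hne : σ₀.symm a ≠ last := by
        rw [← hsymm]
        exact fun h => hax (σ₀.symm.injective h)
      have h1 : (σ₀.symm a).val < n := (σ₀.symm a).isLt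
      have h2 : (σ₀.symm a).val ≠ n - 1 := fun h => hne (Fin.ext h)
      exact Fin.lt_def.mpr (by simp only [last]; omega)
  have hnsub : ¬ A ⊆ precedingSet σ₀ x := fun h => hxnot (h hx)
  rw [if_pos hsub, if_neg hnsub]
  norm_num

lemma gval_zero {α : Type*} [Fintype α] (x : α) (A : Finset α) (hx : x ∉ A) : gval x A = 0 := by
  unfold gval
  rw [Finset.sum_eq_zero, mul_zero]
  intro σ _
  have : A ⊆ insert x (precedingSet σ x) ↔ A ⊆ precedingSet σ x := by
    constructor
    · intro h a ha
      rcases Finset.mem_insert.mp (h ha) with rfl | h'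
      · exact absurd ha hx
      · exact h'
    · intro h; exact h.trans (Finset.subset_insert _ _)
  rw [if_congr this rfl rfl, sub_self]

/-- Constant coefficient of the Shapley value as a function of `p j`. -/
def coefA {α β : Type*} [Fintype α] [Fintype β] (Auth : β → Finset α) (w : β → ℝ)
    (p : α → ℝ) (x j : α) : ℝ :=
  ∑ k ∈ Finset.univ.filter (fun k => j ∉ Auth k),
    w k * (∏ i ∈ Auth k, p i) * gval x (Auth k)

/-- Linear coefficient of the Shapley value as a function of `p j`. -/
def coefB {α β : Type*} [Fintype α] [Fintype β] (Auth : β → Finset α) (w : β → ℝ)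
    (p : α → ℝ) (x j : α) : ℝ :=
  ∑ k ∈ Finset.univ.filter (fun k => j ∈ Auth k),
    w k * (∏ i ∈ (Auth k).erase j, p i) * gval x (Auth k)

lemma shapley_affine {α β : Type*} [Fintype α] [Fintype β] (Auth : β → Finset α) (w : β → ℝ)
    (p : α → ℝ) (x j : α) (q : α → ℝ) (hq : ∀ i, i ≠ j → q i = p i) :
    shapley (relExt q (vFO Auth w)) x
      = coefA Auth w p x j + q j * coefB Auth w p x j := by
  rw [shapley_relExt]
  rw [← Finset.sum_filter_add_sum_filter_not Finset.univ (fun k => j ∈ Auth k)]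
  rw [add_comm]
  congr 1
  · refine Finset.sum_congr rfl fun k hk => ?_
    simp only [Finset.mem_filter] at hk
    congr 1
    congr 1
    refine Finset.prod_congr rfl fun i hi => ?_
    exact hq i (fun h => hk.2 (h ▸ hi))
  · rw [coefB, Finset.mul_sum]
    refine Finset.sum_congr rfl fun k hk => ?_
    simp only [Finset.mem_filter] at hk
    have hprod : (∏ i ∈ Auth k, q i) = q j * ∏ i ∈ (Auth k).erase j, p i := by
      rw [← Finset.mul_prod_erase (Auth k) q hk.2]
      congr 1
      refine Finset.prod_congr rfl fun i hi => ?_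
      exact hq i (Finset.mem_erase.mp hi).1
    rw [hprod]; ring

lemma coefB_pos {α β : Type*} [Fintype α] [Fintype β] (Auth : β → Finset α) (w : β → ℝ)
    (p : α → ℝ) (x j : α) (hw : ∀ k, 0 ≤ w k) (hp : ∀ i, p i ∈ Set.Icc (0 : ℝ) 1)
    (hppos : ∀ i, i ≠ j → 0 < p i) (k₀ : β) (hwk₀ : 0 < w k₀)
    (hxk₀ : x ∈ Auth k₀) (hjk₀ : j ∈ Auth k₀) :
    0 < coefB Auth w p x j := by
  apply Finset.sum_pos'
  · intro k hk
    apply mul_nonneg (mul_nonneg (hw k) _) (gval_nonneg x (Auth k))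
    exact Finset.prod_nonneg fun i _ => (hp i).1
  · refine ⟨k₀, by simp [hjk₀], ?_⟩
    apply mul_pos (mul_pos hwk₀ _) (gval_pos x (Auth k₀) hxk₀)
    exact Finset.prod_pos fun i hi => hppos i (Finset.mem_erase.mp hi).1

lemma coefB_zero {α β : Type*} [Fintype α] [Fintype β] (Auth : β → Finset α) (w : β → ℝ)
    (p : α → ℝ) (x j : α) (hno : ∀ k, ¬(x ∈ Auth k ∧ j ∈ Auth k)) :
    coefB Auth w p x j = 0 := by
  apply Finset.sum_eq_zero
  intro k hk
  simp only [Finset.mem_filter] at hk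
  have hxnot : x ∉ Auth k := fun hx => hno k ⟨hx, hk.2⟩
  rw [gval_zero x (Auth k) hxnot, mul_zero]

theorem stmt_11 {α β : Type*} [Fintype α] [Fintype β] [DecidableEq α]
    (Auth : β → Finset α) (hAuth : ∀ k, (Auth k).Nonempty)
    (w : β → ℝ) (hw : ∀ k, 0 ≤ w k)
    (p : α → ℝ) (hp : ∀ i, p i ∈ Set.Icc (0 : ℝ) 1)
    (x j : α) (hjx : j ≠ x) :
    ((∀ i, i ≠ j → 0 < p i) → (∃ k, 0 < w k ∧ x ∈ Auth k ∧ j ∈ Auth k) →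
        StrictMonoOn (fun t => shapley (relExt (Function.update p j t) (vFO Auth w)) x)
          (Set.Icc 0 1)) ∧
      ((∀ k, ¬(x ∈ Auth k ∧ j ∈ Auth k)) → ∀ t ∈ Set.Icc (0 : ℝ) 1, ∀ s ∈ Set.Icc (0 : ℝ) 1,
        shapley (relExt (Function.update p j t) (vFO Auth w)) x =
          shapley (relExt (Function.update p j s) (vFO Auth w)) x) := by
  have hupd : ∀ t : ℝ, ∀ i, i ≠ j → Function.update p j t i = p i := by
    intro t i hij
    simp [Function.update, hij]
  have hkey : ∀ t : ℝ, shapley (relExt (Function.update p j t) (vFO Auth w)) x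
      = coefA Auth w p x j + t * coefB Auth w p x j := by
    intro t
    rw [shapley_affine Auth w p x j (Function.update p j t) (hupd t),
      ]
    congr 1
    simp [Function.update]
  constructor
  · intro hppos ⟨k₀, hwk₀, hxk₀, hjk₀⟩
    have hBpos : 0 < coefB Auth w p x j :=
      coefB_pos Auth w p x j hw hp hppos k₀ hwk₀ hxk₀ hjk₀
    intro t₁ _ t₂ _ hlt
    simp only [hkey]
    have := mul_lt_mul_of_pos_right hlt hBpos
    linarith
  · intro hno t _ s _
    have hBzero : coefB Auth w p x j = 0 := coefB_zero Auth w p x j hno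
    rw [hkey t, hkey s, hBzero, mul_zero, mul_zero]

end
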